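/- Assume (F), (H), and (L): there exist r > 0 and a continuous function γ̃ : [0,∞) → [0,∞) with γ̃(0) = 0 and γ̃(s) > 0 for s > 0 such that ℓ(x) = γ̃(dist(x,𝔐)) whenever dist(x,𝔐) ≤ r. Write d(x) := dist(x,𝔐). Then: (i) for every x with d(x) ≤ r one has v(x) = ∫₀^{d(x)} γ̃(s) ds, and every optimal control α* for such x has hitting time t_x(α*) = d(x); (ii) for every x ∈ ℝⁿ and every optimal control α* for x, the hitting time t_x(α*) is finite. -/

import Mathlib

open MeasureTheory Filter Metric Set Topology
open scoped ENNReal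

noncomputable section

/-- `n`-dimensional Euclidean space. -/
abbrev Euc (n : ℕ) := EuclideanSpace ℝ (Fin n)

variable {n : ℕ}

/-- Trajectory of the control system `ẏ = α`, `y 0 = x`. -/
def traj (x : Euc n) (α : ℝ → Euc n) (t : ℝ) : Euc n :=
  x + ∫ s in Set.Ioc (0 : ℝ) t, α s

/-- An admissible control: measurable with `‖α s‖ ≤ 1` for a.e. `s ≥ 0`. -/
def Admissible (α : ℝ → Euc n) : Prop :=
  Measurable α ∧ ∀ᵐ s ∂(volume : Measure ℝ), 0 ≤ s → ‖α s‖ ≤ 1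

/-- Hitting time `t_x(α) = inf {s ≥ 0 : y_x^α(s) ∈ M}` (`∞` if the set is empty). -/
def hitTime (M : Set (Euc n)) (x : Euc n) (α : ℝ → Euc n) : ℝ≥0∞ :=
  ⨅ (s : ℝ) (_ : 0 ≤ s) (_ : traj x α s ∈ M), ENNReal.ofReal s

/-- Cost `∫₀^{t_x(α)} ℓ(y_x^α(s)) ds` of a control (as an extended real, `ℓ ≥ 0`). -/
def cost (M : Set (Euc n)) (l : Euc n → ℝ) (x : Euc n) (α : ℝ → Euc n) : ℝ≥0∞ :=
  ∫⁻ s in {s : ℝ | 0 < s ∧ ENNReal.ofReal s < hitTime M x α},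
    ENNReal.ofReal (l (traj x α s))

/-- The value function (extended-real valued). -/
def valE (M : Set (Euc n)) (l : Euc n → ℝ) (x : Euc n) : ℝ≥0∞ :=
  ⨅ (α : ℝ → Euc n) (_ : Admissible α), cost M l x α

/-- The value function `v`. -/
def val (M : Set (Euc n)) (l : Euc n → ℝ) (x : Euc n) : ℝ := (valE M l x).toReal

/-- A control is optimal for `x` if it is admissible and attains the infimum. -/
def IsOptimal (M : Set (Euc n)) (l : Euc n → ℝ) (x : Euc n) (α : ℝ → Euc n) : Prop :=
  Admissible α ∧ cost M l x α = valE M l x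

/-- The viscosity subdifferential `D⁻v(z)`. -/
def subDiff (v : Euc n → ℝ) (z : Euc n) : Set (Euc n) :=
  {p | ∀ ε > 0, ∀ᶠ x in 𝓝 z, v z + (inner ℝ p (x - z) : ℝ) - ε * ‖x - z‖ ≤ v x}

/-- The viscosity superdifferential `D⁺v(z)`. -/
def superDiff (v : Euc n → ℝ) (z : Euc n) : Set (Euc n) :=
  {p | ∀ ε > 0, ∀ᶠ x in 𝓝 z, v x ≤ v z + (inner ℝ p (x - z) : ℝ) + ε * ‖x - z‖}

/-- The set of limiting gradients `D*v(z)`. -/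
def limGrad (v : Euc n → ℝ) (z : Euc n) : Set (Euc n) :=
  {p | ∃ u : ℕ → Euc n, (∀ k, DifferentiableAt ℝ v (u k)) ∧
    Tendsto u atTop (𝓝 z) ∧ Tendsto (fun k => gradient v (u k)) atTop (𝓝 p)}

/-- Distance of the trajectory to the target, with the trajectory extended so that it
remains in `M` after the hitting time. -/
def extDist (M : Set (Euc n)) (x : Euc n) (α : ℝ → Euc n) (t : ℝ) : ℝ :=
  if ENNReal.ofReal t < hitTime M x α then Metric.infDist (traj x α t) M else 0

end

section Aux

variable {n : ℕ} {M : Set (Euc n)} {x : Euc n} {α : ℝ → Euc n}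

lemma adm_integrableOn (hα : Admissible α) {a b : ℝ} (ha : 0 ≤ a) :
    IntegrableOn α (Set.Ioc a b) := by
  refine ⟨hα.1.aestronglyMeasurable, ?_⟩
  refine HasFiniteIntegral.of_bounded (C := 1) ?_
  filter_upwards [ae_restrict_of_ae hα.2, ae_restrict_mem measurableSet_Ioc] with s hs hmem
  exact hs (ha.trans hmem.1.le)

lemma traj_nonpos {t : ℝ} (ht : t ≤ 0) : traj x α t = x := by
  unfold traj
  rw [Set.Ioc_eq_empty (by simpa using ht), setIntegral_empty, add_zero]

lemma traj_zero : traj x α 0 = x := traj_nonpos le_rfl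

lemma traj_add (hα : Admissible α) {s t : ℝ} (h0 : 0 ≤ s) (hst : s ≤ t) :
    traj x α t = traj x α s + ∫ u in Set.Ioc s t, α u := by
  unfold traj
  rw [← Set.Ioc_union_Ioc_eq_Ioc h0 hst,
    setIntegral_union (Set.Ioc_disjoint_Ioc_of_le le_rfl) measurableSet_Ioc
      (adm_integrableOn hα le_rfl) (adm_integrableOn hα h0), add_assoc]

lemma dist_traj_le (hα : Admissible α) {s t : ℝ} (h0 : 0 ≤ s) (hst : s ≤ t) :
    dist (traj x α t) (traj x α s) ≤ t - s := by
  rw [dist_eq_norm, traj_add hα h0 hst, add_sub_cancel_left]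
  calc ‖∫ u in Set.Ioc s t, α u‖ ≤ 1 * (volume (Set.Ioc s t)).toReal := by
        refine norm_setIntegral_le_of_norm_le_const_ae' (by simp [Real.volume_Ioc]) ?_
        filter_upwards [hα.2] with u hu hmem
        exact hu (h0.trans hmem.1.le)
    _ = t - s := by rw [one_mul, Real.volume_Ioc, ENNReal.toReal_ofReal (by linarith)]

lemma lipschitz_traj (hα : Admissible α) : LipschitzWith 1 (traj x α) := by
  refine LipschitzWith.of_dist_le_mul fun s t => ?_
  rw [NNReal.coe_one, one_mul]
  wlog h : t ≤ s generalizing s t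
  · rw [dist_comm, dist_comm s t]; exact this t s (le_of_not_ge h)
  rcases le_or_gt s 0 with hs | hs
  · rw [traj_nonpos hs, traj_nonpos (h.trans hs)]
    simp [dist_nonneg]
  rcases le_or_gt t 0 with ht | ht
  · rw [traj_nonpos ht]
    calc dist (traj x α s) x = dist (traj x α s) (traj x α 0) := by rw [traj_zero]
      _ ≤ s - 0 := dist_traj_le hα le_rfl hs.le
      _ ≤ dist s t := by rw [Real.dist_eq, abs_of_nonneg (by linarith)]; linarith
  · calc dist (traj x α s) (traj x α t) ≤ s - t := dist_traj_le hα ht.le h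
      _ ≤ dist s t := by rw [Real.dist_eq, abs_of_nonneg (by linarith)]

lemma lipschitz_D (hα : Admissible α) :
    LipschitzWith 1 (fun t => Metric.infDist (traj x α t) M) := by
  simpa [Function.comp_def] using (Metric.lipschitz_infDist_pt M).comp (lipschitz_traj hα)

lemma continuous_traj (hα : Admissible α) : Continuous (traj x α) :=
  (lipschitz_traj hα).continuous

lemma continuous_D (hα : Admissible α) :
    Continuous (fun t => Metric.infDist (traj x α t) M) :=
  (lipschitz_D (M := M) hα).continuous

lemma D_sub_le (hα : Admissible α) (s t : ℝ) :
    Metric.infDist (traj x α s) M - dist s t ≤ Metric.infDist (traj x α t) M := by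
  have h := (lipschitz_D (M := M) (x := x) hα).dist_le_mul s t
  rw [NNReal.coe_one, one_mul, Real.dist_eq] at h
  have := abs_le.1 h
  linarith

end Aux


section Aux2

variable {n : ℕ} {M : Set (Euc n)} {x : Euc n} {α : ℝ → Euc n}

lemma hitTime_le {s : ℝ} (h0 : 0 ≤ s) (hm : traj x α s ∈ M) :
    hitTime M x α ≤ ENNReal.ofReal s :=
  iInf_le_of_le s (by rw [iInf_pos h0, iInf_pos hm])

lemma not_mem_of_lt_hitTime {t : ℝ} (h0 : 0 ≤ t) (h : ENNReal.ofReal t < hitTime M x α) :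
    traj x α t ∉ M :=
  fun hm => absurd (hitTime_le h0 hm) h.not_ge

/-- From any time `t₀` before the hitting time, the hitting time is at least
`t₀ + dist(y(t₀), M)`. -/
lemma hitTime_ge (hα : Admissible α) {t₀ : ℝ} (h0 : 0 ≤ t₀)
    (hlt : ENNReal.ofReal t₀ < hitTime M x α) :
    ENNReal.ofReal (t₀ + Metric.infDist (traj x α t₀) M) ≤ hitTime M x α := by
  refine le_iInf fun s => le_iInf fun hs0 => le_iInf fun hsm => ?_
  have hst : t₀ ≤ s := by
    by_contra hc
    exact absurd ((hitTime_le hs0 hsm).trans (ENNReal.ofReal_le_ofReal (le_of_not_ge hc))) hlt.not_ge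
  have hDs : Metric.infDist (traj x α s) M = 0 := Metric.infDist_zero_of_mem hsm
  have := D_sub_le (M := M) (x := x) hα t₀ s
  rw [hDs, Real.dist_eq, abs_of_nonpos (by linarith)] at this
  exact ENNReal.ofReal_le_ofReal (by linarith)

lemma hitTime_toReal_mem (hMcl : IsClosed M) (hα : Admissible α)
    (h : hitTime M x α ≠ ⊤) :
    0 ≤ (hitTime M x α).toReal ∧ traj x α ((hitTime M x α).toReal) ∈ M := by
  set K : Set ℝ := {s | 0 ≤ s ∧ traj x α s ∈ M} with hK
  have hKne : K.Nonempty := by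
    by_contra hc
    rw [Set.not_nonempty_iff_eq_empty] at hc
    apply h
    rw [hitTime, iInf_eq_top]
    intro s
    rw [iInf_eq_top]
    intro hs0
    rw [iInf_eq_top]
    intro hsm
    exact absurd (Set.eq_empty_iff_forall_notMem.1 hc s) (by exact fun hn => hn ⟨hs0, hsm⟩)
  have hKcl : IsClosed K := by
    have : K = Set.Ici (0:ℝ) ∩ traj x α ⁻¹' M := by
      ext s; simp [hK, Set.mem_Ici, and_comm]
    rw [this]
    exact isClosed_Ici.inter (hMcl.preimage (continuous_traj hα))
  have hKbd : BddBelow K := ⟨0, fun s hs => hs.1⟩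
  have hmem : sInf K ∈ K := hKcl.csInf_mem hKne hKbd
  have heq : hitTime M x α = ENNReal.ofReal (sInf K) := by
    refine le_antisymm (hitTime_le hmem.1 hmem.2) ?_
    refine le_iInf fun s => le_iInf fun hs0 => le_iInf fun hsm => ?_
    exact ENNReal.ofReal_le_ofReal (csInf_le hKbd ⟨hs0, hsm⟩)
  rw [heq, ENNReal.toReal_ofReal hmem.1]
  exact ⟨hmem.1, hmem.2⟩

lemma le_hitTime_of_forall {c : ℝ} (hc : ∀ s, 0 ≤ s → traj x α s ∈ M → c ≤ s) :
    ENNReal.ofReal c ≤ hitTime M x α :=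
  le_iInf fun s => le_iInf fun hs0 => le_iInf fun hsm =>
    ENNReal.ofReal_le_ofReal (hc s hs0 hsm)

end Aux2


section Aux3

lemma lintegral_Ioo_ofReal_eq (γt : ℝ → ℝ) (hc : Continuous γt) (hpos : ∀ s, 0 < s → 0 < γt s)
    {b : ℝ} (hb : 0 ≤ b) :
    ∫⁻ s in Set.Ioo (0:ℝ) b, ENNReal.ofReal (γt s) =
      ENNReal.ofReal (∫ s in (0:ℝ)..b, γt s) := by
  rw [intervalIntegral.integral_of_le hb, MeasureTheory.integral_Ioc_eq_integral_Ioo,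
    ofReal_integral_eq_lintegral_ofReal
      ((hc.integrableOn_Ioc).mono_set Set.Ioo_subset_Ioc_self)
      (by filter_upwards [ae_restrict_mem measurableSet_Ioo] with s hs
          exact (hpos s hs.1).le)]

lemma lintegral_reflect (f : ℝ → ℝ≥0∞) (hf : Measurable f) (c b : ℝ) :
    ∫⁻ t in Set.Ioo c (c+b), f ((b + c) - t) = ∫⁻ s in Set.Ioo 0 b, f s := by
  have hmp : MeasurePreserving (fun t : ℝ => (b + c) - t) volume volume :=
    Measure.measurePreserving_sub_left volume (b + c)
  have hpre : (fun t : ℝ => (b + c) - t) ⁻¹' (Set.Ioo 0 b) = Set.Ioo c (c + b) := by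
    ext t
    simp only [Set.mem_preimage, Set.mem_Ioo]
    constructor <;> rintro ⟨h1, h2⟩ <;> constructor <;> linarith
  rw [← hpre, hmp.setLIntegral_comp_preimage measurableSet_Ioo hf]

lemma volume_image_le {f : ℝ → ℝ} (hf : LipschitzWith 1 f) (E : Set ℝ) :
    volume (f '' E) ≤ volume E := by
  have h := hf.hausdorffMeasure_image_le (zero_le_one) E
  simpa [MeasureTheory.hausdorffMeasure_real] using h

end Aux3


section Aux4

variable {n : ℕ} {M : Set (Euc n)} {x : Euc n} {α : ℝ → Euc n}

lemma l_nonneg {l : Euc n → ℝ} (hlpos : ∀ z ∉ M, 0 < l z) (hlzero : ∀ z ∈ M, l z = 0)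
    (z : Euc n) : 0 ≤ l z := by
  by_cases hz : z ∈ M
  · exact (hlzero z hz).ge
  · exact (hlpos z hz).le

lemma l_lower_bound {l : Euc n → ℝ} {γ γt : ℝ → ℝ} {r : ℝ} (hr : 0 < r)
    (hlpos : ∀ z ∉ M, 0 < l z) (hlzero : ∀ z ∈ M, l z = 0)
    (hH : ∀ δ : ℝ, 0 < δ → 0 < γ δ ∧
      γ δ < sInf (l '' {y : Euc n | δ < Metric.infDist y M}))
    (hγtc : Continuous γt) (hγtpos : ∀ s : ℝ, 0 < s → 0 < γt s)
    (hL : ∀ z : Euc n, Metric.infDist z M ≤ r → l z = γt (Metric.infDist z M))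
    {δ : ℝ} (hδ : 0 < δ) (hδr : δ ≤ r) :
    ∃ c : ℝ, 0 < c ∧ ∀ z : Euc n, δ ≤ Metric.infDist z M → c ≤ l z := by
  obtain ⟨m, hm, hmin⟩ := (isCompact_Icc (a := δ) (b := r)).exists_isMinOn
    (Set.nonempty_Icc.2 hδr) hγtc.continuousOn
  refine ⟨min (γt m) (γ r), lt_min (hγtpos m (hδ.trans_le hm.1)) (hH r hr).1, fun z hz => ?_⟩
  rcases le_or_gt (Metric.infDist z M) r with h | h
  · rw [hL z h]
    exact (min_le_left _ _).trans (hmin ⟨hz, h⟩)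
  · have h1 : l z ∈ l '' {y : Euc n | r < Metric.infDist y M} := ⟨z, h, rfl⟩
    have h2 : BddBelow (l '' {y : Euc n | r < Metric.infDist y M}) := by
      refine ⟨0, ?_⟩
      rintro w ⟨y, -, rfl⟩
      exact l_nonneg hlpos hlzero y
    exact (min_le_right _ _).trans ((hH r hr).2.le.trans (csInf_le h2 h1))

/-- The concatenated control: follow `α` until `t₀`, then go straight to `p`. -/
noncomputable def concat (α : ℝ → Euc n) (t₀ : ℝ) (u : Euc n) : ℝ → Euc n :=
  fun s => if s ≤ t₀ then α s else u

variable {t₀ : ℝ} {p : Euc n}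

lemma concat_admissible (hα : Admissible α) {u : Euc n} (hu : ‖u‖ = 1) :
    Admissible (concat α t₀ u) := by
  constructor
  · exact Measurable.ite measurableSet_Iic hα.1 measurable_const
  · filter_upwards [hα.2] with s hs hs0
    by_cases h : s ≤ t₀
    · simpa [concat, h] using hs hs0
    · simp [concat, h, hu.le]

lemma concat_traj_left {u : Euc n} {t : ℝ} (ht : t ≤ t₀) :
    traj x (concat α t₀ u) t = traj x α t := by
  unfold traj
  congr 1
  refine MeasureTheory.setIntegral_congr_fun measurableSet_Ioc fun s hs => ?_
  simp [concat, hs.2.trans ht]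

lemma concat_traj_right (hα : Admissible α) {u : Euc n} (hu : ‖u‖ = 1) (h0 : 0 ≤ t₀)
    {t : ℝ} (ht : t₀ ≤ t) :
    traj x (concat α t₀ u) t = traj x α t₀ + (t - t₀) • u := by
  rw [traj_add (concat_admissible hα hu) h0 ht, concat_traj_left le_rfl]
  congr 1
  have : ∀ s ∈ Set.Ioc t₀ t, concat α t₀ u s = u := by
    intro s hs
    simp [concat, not_le.2 hs.1]
  rw [MeasureTheory.setIntegral_congr_fun measurableSet_Ioc this,
    MeasureTheory.setIntegral_const, Real.volume_real_Ioc_of_le ht]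

end Aux4


section Aux5

variable {n : ℕ} {M : Set (Euc n)} {x : Euc n} {α : ℝ → Euc n} {t₀ : ℝ} {p : Euc n}

/-- Distance along the straight-line part of the concatenated control. -/
lemma concat_D (hα : Admissible α) (h0 : 0 ≤ t₀) (hp : p ∈ M)
    (hb : Metric.infDist (traj x α t₀) M = dist (traj x α t₀) p)
    (hbpos : 0 < dist (traj x α t₀) p)
    {t : ℝ} (ht : t₀ ≤ t) (ht' : t ≤ t₀ + dist (traj x α t₀) p) :
    Metric.infDist
      (traj x (concat α t₀ ((dist (traj x α t₀) p)⁻¹ • (p - traj x α t₀))) t) M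
      = dist (traj x α t₀) p - (t - t₀) := by
  set z := traj x α t₀ with hz
  set b := dist z p with hbdef
  have hu : ‖b⁻¹ • (p - z)‖ = 1 := by
    have hbn : ‖p - z‖ = b := by rw [hbdef, dist_eq_norm']
    rw [norm_smul, norm_inv, Real.norm_eq_abs, abs_of_pos hbpos, hbn,
      inv_mul_cancel₀ hbpos.ne']
  set u := b⁻¹ • (p - z) with hudef
  have htraj : traj x (concat α t₀ u) t = z + (t - t₀) • u :=
    concat_traj_right hα hu h0 ht
  refine le_antisymm ?_ ?_
  · calc Metric.infDist (traj x (concat α t₀ u) t) M ≤ dist (traj x (concat α t₀ u) t) p :=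
          Metric.infDist_le_dist_of_mem hp
      _ = b - (t - t₀) := by
          rw [htraj, dist_eq_norm]
          have : z + (t - t₀) • u - p = ((t - t₀) * b⁻¹ - 1) • (p - z) := by
            rw [hudef, smul_smul]
            module
          rw [this, norm_smul, Real.norm_eq_abs, ← dist_eq_norm', ← hbdef,
            abs_of_nonpos (by
              have : (t - t₀) * b⁻¹ ≤ 1 := by
                rw [← div_eq_mul_inv, div_le_one hbpos]
                linarith
              linarith)]
          field_simp
          ring
  · have := D_sub_le (M := M) (x := x) (α := concat α t₀ u)
      (concat_admissible (t₀ := t₀) hα hu) t₀ t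
    rw [concat_traj_left (α := α) (u := u) le_rfl, ← hz, hb, Real.dist_eq,
      abs_of_nonpos (by linarith)] at this
    linarith

lemma concat_hitTime (hMcl : IsClosed M) (hα : Admissible α) (h0 : 0 ≤ t₀) (hp : p ∈ M)
    (hb : Metric.infDist (traj x α t₀) M = dist (traj x α t₀) p)
    (hbpos : 0 < dist (traj x α t₀) p)
    (hnot : ∀ s, 0 ≤ s → s ≤ t₀ → traj x α s ∉ M) :
    hitTime M x (concat α t₀ ((dist (traj x α t₀) p)⁻¹ • (p - traj x α t₀)))
      = ENNReal.ofReal (t₀ + dist (traj x α t₀) p) := by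
  set z := traj x α t₀ with hz
  set b := dist z p with hbdef
  have hu : ‖b⁻¹ • (p - z)‖ = 1 := by
    have hbn : ‖p - z‖ = b := by rw [hbdef, dist_eq_norm']
    rw [norm_smul, norm_inv, Real.norm_eq_abs, abs_of_pos hbpos, hbn,
      inv_mul_cancel₀ hbpos.ne']
  set u := b⁻¹ • (p - z) with hudef
  refine le_antisymm ?_ ?_
  · refine hitTime_le (by linarith) ?_
    have : traj x (concat α t₀ u) (t₀ + b) = z + (t₀ + b - t₀) • u :=
      concat_traj_right hα hu h0 (by linarith)
    rw [this]
    have : z + (t₀ + b - t₀) • u = p := by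
      rw [hudef, add_sub_cancel_left, smul_smul, mul_inv_cancel₀ hbpos.ne', one_smul]
      abel
    rw [this]; exact hp
  · refine le_hitTime_of_forall fun s hs0 hsm => ?_
    by_contra hc
    push_neg at hc
    rcases le_or_gt s t₀ with h | h
    · rw [concat_traj_left h] at hsm
      exact hnot s hs0 h hsm
    · have hD := concat_D (M := M) hα h0 hp hb hbpos h.le (by linarith)
      rw [Metric.infDist_zero_of_mem hsm] at hD
      linarith

lemma concat_tail_cost {l : Euc n → ℝ} {γt : ℝ → ℝ} {r : ℝ}
    (hγtc : Continuous γt) (hγtpos : ∀ s : ℝ, 0 < s → 0 < γt s)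
    (hL : ∀ z : Euc n, Metric.infDist z M ≤ r → l z = γt (Metric.infDist z M))
    (hα : Admissible α) (h0 : 0 ≤ t₀) (hp : p ∈ M)
    (hb : Metric.infDist (traj x α t₀) M = dist (traj x α t₀) p)
    (hbpos : 0 < dist (traj x α t₀) p) (hbr : dist (traj x α t₀) p ≤ r) :
    ∫⁻ t in Set.Ioo t₀ (t₀ + dist (traj x α t₀) p),
        ENNReal.ofReal (l (traj x (concat α t₀
          ((dist (traj x α t₀) p)⁻¹ • (p - traj x α t₀))) t))
      = ENNReal.ofReal (∫ s in (0:ℝ)..(dist (traj x α t₀) p), γt s) := by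
  set z := traj x α t₀ with hz
  set b := dist z p with hbdef
  set u := b⁻¹ • (p - z) with hudef
  have hcong : ∀ t ∈ Set.Ioo t₀ (t₀ + b),
      ENNReal.ofReal (l (traj x (concat α t₀ u) t)) = ENNReal.ofReal (γt ((b + t₀) - t)) := by
    intro t ht
    have hD := concat_D (M := M) hα h0 hp hb hbpos ht.1.le ht.2.le
    rw [hL _ (by rw [hD]; linarith [ht.1]), hD]
    ring_nf
    rw [hbdef, hz]
    ring_nf
  rw [MeasureTheory.setLIntegral_congr_fun measurableSet_Ioo hcong,
    lintegral_reflect (fun s => ENNReal.ofReal (γt s))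
      (ENNReal.measurable_ofReal.comp hγtc.measurable) t₀ b,
    lintegral_Ioo_ofReal_eq γt hγtc hγtpos hbpos.le]

end Aux5


section AuxMain

variable {n : ℕ} {M : Set (Euc n)} {x : Euc n} {α : ℝ → Euc n} {l : Euc n → ℝ}
  {γ γt : ℝ → ℝ} {r t₀ : ℝ}

/-- If the hitting time is exactly `t₀ + d(y(t₀))`, the tail cost from `t₀` equals
`∫₀^{d(y(t₀))} γ̃`. -/
lemma tail_cost_eq (hMcl : IsClosed M) (hα : Admissible α)
    (hγtc : Continuous γt) (hγtpos : ∀ s : ℝ, 0 < s → 0 < γt s)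
    (hL : ∀ z : Euc n, Metric.infDist z M ≤ r → l z = γt (Metric.infDist z M))
    (h0 : 0 ≤ t₀)
    (hbr : Metric.infDist (traj x α t₀) M ≤ r)
    (hτ : hitTime M x α = ENNReal.ofReal (t₀ + Metric.infDist (traj x α t₀) M)) :
    ∫⁻ t in {t : ℝ | t₀ < t ∧ ENNReal.ofReal t < hitTime M x α},
        ENNReal.ofReal (l (traj x α t))
      = ENNReal.ofReal (∫ s in (0:ℝ)..(Metric.infDist (traj x α t₀) M), γt s) := by
  set b := Metric.infDist (traj x α t₀) M with hbdef
  have hb0 : 0 ≤ b := Metric.infDist_nonneg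
  have hT0 : 0 ≤ t₀ + b := by linarith
  have hmem : traj x α (t₀ + b) ∈ M := by
    have h1 : hitTime M x α ≠ ⊤ := by rw [hτ]; exact ENNReal.ofReal_ne_top
    have h2 := (hitTime_toReal_mem hMcl hα h1).2
    rwa [hτ, ENNReal.toReal_ofReal hT0] at h2
  have hDT : Metric.infDist (traj x α (t₀ + b)) M = 0 := Metric.infDist_zero_of_mem hmem
  have hS : {t : ℝ | t₀ < t ∧ ENNReal.ofReal t < hitTime M x α} = Set.Ioo t₀ (t₀ + b) := by
    ext t
    simp only [Set.mem_setOf_eq, Set.mem_Ioo, hτ]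
    constructor
    · rintro ⟨h1, h2⟩
      exact ⟨h1, (ENNReal.ofReal_lt_ofReal_iff_of_nonneg (by linarith)).1 h2⟩
    · rintro ⟨h1, h2⟩
      exact ⟨h1, (ENNReal.ofReal_lt_ofReal_iff_of_nonneg (by linarith)).2 h2⟩
  rw [hS]
  have hD : ∀ t ∈ Set.Ioo t₀ (t₀ + b), Metric.infDist (traj x α t) M = (b + t₀) - t := by
    intro t ht
    have h1 := D_sub_le (M := M) (x := x) hα t₀ t
    have h2 := D_sub_le (M := M) (x := x) hα t (t₀ + b)
    rw [Real.dist_eq, abs_of_nonpos (by linarith [ht.1])] at h1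
    rw [Real.dist_eq, abs_of_nonpos (by linarith [ht.2]), hDT] at h2
    have h3 := Metric.infDist_nonneg (x := traj x α t) (s := M)
    linarith
  have hcong : ∀ t ∈ Set.Ioo t₀ (t₀ + b),
      ENNReal.ofReal (l (traj x α t)) = ENNReal.ofReal (γt ((b + t₀) - t)) := by
    intro t ht
    rw [hL _ (by rw [hD t ht]; linarith [ht.1]), hD t ht]
  rw [MeasureTheory.setLIntegral_congr_fun measurableSet_Ioo hcong,
    lintegral_reflect (fun s => ENNReal.ofReal (γt s))
      (ENNReal.measurable_ofReal.comp hγtc.measurable) t₀ b,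
    lintegral_Ioo_ofReal_eq γt hγtc hγtpos hb0]

/-- If the hitting time exceeds `t₀ + d(y(t₀))`, the tail cost from `t₀` strictly exceeds
`∫₀^{d(y(t₀))} γ̃`. -/
lemma tail_cost_lt (hMne : M.Nonempty) (hMcl : IsClosed M)
    (hlc : Continuous l)
    (hlpos : ∀ z ∉ M, 0 < l z) (hlzero : ∀ z ∈ M, l z = 0)
    (hH : ∀ δ : ℝ, 0 < δ → 0 < γ δ ∧
      γ δ < sInf (l '' {y : Euc n | δ < Metric.infDist y M}))
    (hr : 0 < r) (hγtc : Continuous γt) (hγtpos : ∀ s : ℝ, 0 < s → 0 < γt s)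
    (hL : ∀ z : Euc n, Metric.infDist z M ≤ r → l z = γt (Metric.infDist z M))
    (hα : Admissible α) (h0 : 0 ≤ t₀)
    (hbr : Metric.infDist (traj x α t₀) M ≤ r)
    (hτgt : ENNReal.ofReal (t₀ + Metric.infDist (traj x α t₀) M) < hitTime M x α) :
    ENNReal.ofReal (∫ s in (0:ℝ)..(Metric.infDist (traj x α t₀) M), γt s)
      < ∫⁻ t in {t : ℝ | t₀ < t ∧ ENNReal.ofReal t < hitTime M x α},
          ENNReal.ofReal (l (traj x α t)) := by
  set b := Metric.infDist (traj x α t₀) M with hbdef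
  have hb0 : 0 ≤ b := Metric.infDist_nonneg
  have ht₀τ : ENNReal.ofReal t₀ < hitTime M x α :=
    lt_of_le_of_lt (ENNReal.ofReal_le_ofReal (by linarith)) hτgt
  have hbpos : 0 < b := by
    rcases hb0.lt_or_eq with h | h
    · exact h
    · exfalso
      have hmem : traj x α t₀ ∈ M := (hMcl.mem_iff_infDist_zero hMne).2 h.symm
      exact absurd (hitTime_le h0 hmem) ht₀τ.not_ge
  set S := {t : ℝ | t₀ < t ∧ ENNReal.ofReal t < hitTime M x α} with hSdef
  have hSmeas : MeasurableSet S := by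
    have : S = Set.Ioi t₀ ∩ ENNReal.ofReal ⁻¹' (Set.Iio (hitTime M x α)) := by
      ext t; simp [hSdef, Set.mem_Ioi, and_comm]
    rw [this]
    exact measurableSet_Ioi.inter (ENNReal.measurable_ofReal measurableSet_Iio)
  have hDcont : Continuous (fun t => Metric.infDist (traj x α t) M) := continuous_D hα
  have hDmeas : Measurable (fun t => Metric.infDist (traj x α t) M) := hDcont.measurable
  have hDposS : ∀ t ∈ S, 0 < Metric.infDist (traj x α t) M := by
    intro t ht
    have h1 : traj x α t ∉ M := not_mem_of_lt_hitTime (by linarith [ht.1]) ht.2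
    exact (hMcl.notMem_iff_infDist_pos hMne).1 h1
  have hint : Measurable fun t => ENNReal.ofReal (l (traj x α t)) :=
    ENNReal.measurable_ofReal.comp (hlc.comp (continuous_traj hα)).measurable
  by_cases htop : (∫⁻ t in S, ENNReal.ofReal (l (traj x α t))) = ⊤
  · rw [htop]; exact ENNReal.ofReal_lt_top
  -- small distances are attained
  have hsmall : ∀ s : ℝ, 0 < s → s < b → ∃ t₁ ∈ S, Metric.infDist (traj x α t₁) M < s := by
    intro s hs hsb
    by_cases hτtop : hitTime M x α = ⊤
    · by_contra hc
      push_neg at hc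
      obtain ⟨c, hcpos, hcle⟩ :=
        l_lower_bound hr hlpos hlzero hH hγtc hγtpos hL hs (hsb.le.trans hbr)
      have hbound : ∫⁻ t in S, (ENNReal.ofReal c) ≤ ∫⁻ t in S, ENNReal.ofReal (l (traj x α t)) :=
        setLIntegral_mono hint fun t ht => ENNReal.ofReal_le_ofReal (hcle _ (hc t ht))
      rw [setLIntegral_const] at hbound
      have hSvol : volume S = ⊤ := by
        refine top_le_iff.1 ?_
        calc (⊤ : ℝ≥0∞) = volume (Set.Ioi t₀) := Real.volume_Ioi.symm
          _ ≤ volume S := measure_mono fun t ht =>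
              ⟨ht, by rw [hτtop]; exact ENNReal.ofReal_lt_top⟩
      rw [hSvol, ENNReal.mul_top (ENNReal.ofReal_pos.2 hcpos).ne'] at hbound
      exact htop (top_le_iff.1 hbound)
    · have hTmem := hitTime_toReal_mem hMcl hα hτtop
      have hτT : hitTime M x α = ENNReal.ofReal ((hitTime M x α).toReal) :=
        (ENNReal.ofReal_toReal hτtop).symm
      have hTgt : t₀ + b < (hitTime M x α).toReal := by
        have h1 := hτgt
        rw [hτT] at h1
        exact (ENNReal.ofReal_lt_ofReal_iff_of_nonneg (by linarith)).1 h1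
      have hDT : Metric.infDist (traj x α ((hitTime M x α).toReal)) M = 0 :=
        Metric.infDist_zero_of_mem hTmem.2
      have hsub := intermediate_value_Icc' (by linarith : t₀ ≤ (hitTime M x α).toReal)
        hDcont.continuousOn
      have hmem2 : s / 2 ∈ Set.Icc (Metric.infDist (traj x α ((hitTime M x α).toReal)) M)
          (Metric.infDist (traj x α t₀) M) := by
        rw [hDT, ← hbdef]
        constructor <;> linarith
      obtain ⟨t, htIcc, hts'⟩ := hsub hmem2
      have hts : Metric.infDist (traj x α t) M = s / 2 := hts'
      have htne : t ≠ t₀ := by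
        intro h
        rw [h, ← hbdef] at hts
        linarith
      have htne2 : t ≠ (hitTime M x α).toReal := by
        intro h
        rw [h, hDT] at hts
        linarith
      have ht₀t : t₀ < t := lt_of_le_of_ne htIcc.1 (Ne.symm htne)
      refine ⟨t, ⟨ht₀t, ?_⟩, by rw [hts]; linarith⟩
      
      rw [hτT]
      exact (ENNReal.ofReal_lt_ofReal_iff_of_nonneg (by linarith)).2
        (lt_of_le_of_ne htIcc.2 htne2)
  set A := S ∩ (fun t => Metric.infDist (traj x α t) M) ⁻¹' (Set.Ioo 0 b) with hAdef
  have hAmeas : MeasurableSet A := hSmeas.inter (hDmeas measurableSet_Ioo)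
  have hAS : A ⊆ S := Set.inter_subset_left
  have hsurj : ∀ s ∈ Set.Ioo (0:ℝ) b, ∃ t ∈ A, Metric.infDist (traj x α t) M = s := by
    rintro s ⟨hs0, hsb⟩
    obtain ⟨t₁, ht₁S, ht₁⟩ := hsmall s hs0 hsb
    have hsub := intermediate_value_Icc' (le_of_lt ht₁S.1) hDcont.continuousOn
    obtain ⟨t, htIcc, hts'⟩ := hsub ⟨ht₁.le, hsb.le⟩
    have hts : Metric.infDist (traj x α t) M = s := hts'
    have htne : t ≠ t₀ := by
      intro h
      rw [h, ← hbdef] at hts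
      exact absurd hts hsb.ne'
    have ht₀t : t₀ < t := lt_of_le_of_ne htIcc.1 (Ne.symm htne)
    have htS : t ∈ S :=
      ⟨ht₀t, lt_of_le_of_lt (ENNReal.ofReal_le_ofReal htIcc.2) ht₁S.2⟩
    refine ⟨t, ⟨htS, ?_⟩, hts⟩
    show Metric.infDist (traj x α t) M ∈ Set.Ioo 0 b
    rw [hts]
    exact ⟨hs0, hsb⟩
  set μm := Measure.map (fun t => Metric.infDist (traj x α t) M) (volume.restrict A) with hμm
  have hμapp : ∀ B : Set ℝ, MeasurableSet B →
      μm B = volume ((fun t => Metric.infDist (traj x α t) M) ⁻¹' B ∩ A) := by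
    intro B hB
    rw [hμm, Measure.map_apply hDmeas hB, Measure.restrict_apply (hDmeas hB)]
  have hle : volume.restrict (Set.Ioo (0:ℝ) b) ≤ μm := by
    rw [Measure.le_iff]
    intro B hB
    rw [Measure.restrict_apply hB, hμapp B hB]
    have hsub2 : B ∩ Set.Ioo 0 b ⊆ (fun t => Metric.infDist (traj x α t) M) ''
        ((fun t => Metric.infDist (traj x α t) M) ⁻¹' B ∩ A) := by
      rintro s ⟨hsB, hsI⟩
      obtain ⟨t, htA, hts⟩ := hsurj s hsI
      refine ⟨t, ⟨?_, htA⟩, hts⟩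
      show Metric.infDist (traj x α t) M ∈ B
      rw [hts]
      exact hsB
    calc volume (B ∩ Set.Ioo 0 b)
        ≤ volume ((fun t => Metric.infDist (traj x α t) M) ''
            ((fun t => Metric.infDist (traj x α t) M) ⁻¹' B ∩ A)) := measure_mono hsub2
      _ ≤ volume ((fun t => Metric.infDist (traj x α t) M) ⁻¹' B ∩ A) :=
          volume_image_le (lipschitz_D hα) _
  have hfmeas : Measurable (fun s => ENNReal.ofReal (γt s)) :=
    ENNReal.measurable_ofReal.comp hγtc.measurable
  have hAint : ∫⁻ t in A, ENNReal.ofReal (l (traj x α t))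
      = ∫⁻ s, ENNReal.ofReal (γt s) ∂μm := by
    rw [hμm, lintegral_map hfmeas hDmeas]
    refine MeasureTheory.setLIntegral_congr_fun hAmeas (fun t ht => ?_)
    have hDt : Metric.infDist (traj x α t) M ∈ Set.Ioo 0 b := ht.2
    rw [hL _ (hDt.2.le.trans hbr)]
  have hνG : ∫⁻ s in Set.Ioo (0:ℝ) b, ENNReal.ofReal (γt s)
      = ENNReal.ofReal (∫ s in (0:ℝ)..b, γt s) :=
    lintegral_Ioo_ofReal_eq γt hγtc hγtpos hb0
  have hGne : ENNReal.ofReal (∫ s in (0:ℝ)..b, γt s) ≠ ⊤ := ENNReal.ofReal_ne_top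
  rcases eq_or_ne (volume (S \ A)) 0 with hz | hnz
  · -- excess mass in the occupation measure
    have hvolS : ENNReal.ofReal b < volume S := by
      by_cases hτtop : hitTime M x α = ⊤
      · calc ENNReal.ofReal b < ⊤ := ENNReal.ofReal_lt_top
          _ = volume (Set.Ioi t₀) := Real.volume_Ioi.symm
          _ ≤ volume S := measure_mono fun t ht =>
              ⟨ht, by rw [hτtop]; exact ENNReal.ofReal_lt_top⟩
      · have hτT : hitTime M x α = ENNReal.ofReal ((hitTime M x α).toReal) :=
          (ENNReal.ofReal_toReal hτtop).symm
        have hTgt : t₀ + b < (hitTime M x α).toReal := by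
          have h1 := hτgt
          rw [hτT] at h1
          exact (ENNReal.ofReal_lt_ofReal_iff_of_nonneg (by linarith)).1 h1
        have hsub3 : Set.Ioo t₀ ((hitTime M x α).toReal) ⊆ S := by
          rintro t ⟨h1, h2⟩
          refine ⟨h1, ?_⟩
          rw [hτT]
          exact (ENNReal.ofReal_lt_ofReal_iff_of_nonneg (by linarith)).2 h2
        calc ENNReal.ofReal b < ENNReal.ofReal ((hitTime M x α).toReal - t₀) :=
              (ENNReal.ofReal_lt_ofReal_iff_of_nonneg hb0).2 (by linarith)
          _ = volume (Set.Ioo t₀ ((hitTime M x α).toReal)) := (Real.volume_Ioo).symm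
          _ ≤ volume S := measure_mono hsub3
    have hvolA : volume A = volume S := by
      refine le_antisymm (measure_mono hAS) ?_
      calc volume S ≤ volume (A ∪ (S \ A)) := measure_mono fun t ht => by
            by_cases h : t ∈ A
            · exact Or.inl h
            · exact Or.inr ⟨ht, h⟩
        _ ≤ volume A + volume (S \ A) := measure_union_le _ _
        _ = volume A := by rw [hz, add_zero]
    have hμIoo : volume.restrict (Set.Ioo (0:ℝ) b) (Set.Ioo (0:ℝ) b) < μm (Set.Ioo (0:ℝ) b) := by
      rw [hμapp _ measurableSet_Ioo, Measure.restrict_apply measurableSet_Ioo,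
        Set.inter_self]
      have hAsub : (fun t => Metric.infDist (traj x α t) M) ⁻¹' (Set.Ioo 0 b) ∩ A = A :=
        Set.inter_eq_right.2 fun t ht => ht.2
      rw [hAsub, hvolA, Real.volume_Ioo, sub_zero]
      exact hvolS
    have hκpos : 0 < (μm - volume.restrict (Set.Ioo (0:ℝ) b)) (Set.Ioo (0:ℝ) b) := by
      rw [Measure.sub_apply measurableSet_Ioo hle]
      exact tsub_pos_of_lt hμIoo
    have hκint : 0 < ∫⁻ s, ENNReal.ofReal (γt s) ∂(μm - volume.restrict (Set.Ioo (0:ℝ) b)) := by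
      rw [lintegral_pos_iff_support hfmeas]
      refine lt_of_lt_of_le hκpos (measure_mono fun s hs => ?_)
      exact (ENNReal.ofReal_pos.2 (hγtpos s hs.1)).ne'
    calc ENNReal.ofReal (∫ s in (0:ℝ)..b, γt s)
        < ENNReal.ofReal (∫ s in (0:ℝ)..b, γt s)
            + ∫⁻ s, ENNReal.ofReal (γt s) ∂(μm - volume.restrict (Set.Ioo (0:ℝ) b)) :=
          ENNReal.lt_add_right hGne hκint.ne'
      _ = (∫⁻ s in Set.Ioo (0:ℝ) b, ENNReal.ofReal (γt s))
            + ∫⁻ s, ENNReal.ofReal (γt s) ∂(μm - volume.restrict (Set.Ioo (0:ℝ) b)) := by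
          rw [hνG]
      _ = ∫⁻ s, ENNReal.ofReal (γt s) ∂μm := by
          conv_rhs => rw [← Measure.sub_add_cancel_of_le hle]
          rw [lintegral_add_measure]
          exact add_comm _ _
      _ = ∫⁻ t in A, ENNReal.ofReal (l (traj x α t)) := hAint.symm
      _ ≤ ∫⁻ t in S, ENNReal.ofReal (l (traj x α t)) := lintegral_mono_set hAS
  · -- positive cost spent off `A`
    obtain ⟨c, hcpos, hcle⟩ :=
      l_lower_bound hr hlpos hlzero hH hγtc hγtpos hL hbpos hbr
    have hSA : ∀ t ∈ S \ A, b ≤ Metric.infDist (traj x α t) M := by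
      rintro t ⟨htS, htA⟩
      by_contra hc2
      push_neg at hc2
      exact htA ⟨htS, ⟨hDposS t htS, hc2⟩⟩
    have h2 : ENNReal.ofReal c * volume (S \ A)
        ≤ ∫⁻ t in S \ A, ENNReal.ofReal (l (traj x α t)) := by
      rw [← setLIntegral_const]
      exact setLIntegral_mono hint fun t ht => ENNReal.ofReal_le_ofReal (hcle _ (hSA t ht))
    have hsplit : ∫⁻ t in S, ENNReal.ofReal (l (traj x α t))
        = (∫⁻ t in A, ENNReal.ofReal (l (traj x α t)))
          + ∫⁻ t in S \ A, ENNReal.ofReal (l (traj x α t)) := by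
      rw [← lintegral_union (hSmeas.diff hAmeas) disjoint_sdiff_self_right,
        Set.union_diff_cancel hAS]
    have hAge : ENNReal.ofReal (∫ s in (0:ℝ)..b, γt s)
        ≤ ∫⁻ t in A, ENNReal.ofReal (l (traj x α t)) := by
      rw [hAint, ← hνG]
      exact lintegral_mono' hle le_rfl
    calc ENNReal.ofReal (∫ s in (0:ℝ)..b, γt s)
        < ENNReal.ofReal (∫ s in (0:ℝ)..b, γt s) + ENNReal.ofReal c * volume (S \ A) :=
          ENNReal.lt_add_right hGne
            (mul_ne_zero (ENNReal.ofReal_pos.2 hcpos).ne' hnz)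
      _ ≤ (∫⁻ t in A, ENNReal.ofReal (l (traj x α t)))
            + ∫⁻ t in S \ A, ENNReal.ofReal (l (traj x α t)) := add_le_add hAge h2
      _ = ∫⁻ t in S, ENNReal.ofReal (l (traj x α t)) := hsplit.symm

end AuxMain


section Aux7

variable {n : ℕ} {M : Set (Euc n)} {x : Euc n} {α : ℝ → Euc n}

lemma hitTime_pos (hMcl : IsClosed M) (hα : Admissible α) (hx : x ∉ M) :
    0 < hitTime M x α := by
  rw [pos_iff_ne_zero]
  intro h
  have h1 : hitTime M x α ≠ ⊤ := by rw [h]; exact ENNReal.zero_ne_top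
  have h2 := (hitTime_toReal_mem hMcl hα h1).2
  rw [h, ENNReal.toReal_zero, traj_zero] at h2
  exact hx h2

lemma straight_exists (hMcl : IsClosed M) (hMne : M.Nonempty) (hx : x ∉ M) :
    ∃ α₀ : ℝ → Euc n, Admissible α₀ ∧
      hitTime M x α₀ = ENNReal.ofReal (Metric.infDist x M) := by
  obtain ⟨p, hpM, hpd⟩ := hMcl.exists_infDist_eq_dist hMne x
  have hdpos : 0 < Metric.infDist x M := (hMcl.notMem_iff_infDist_pos hMne).1 hx
  have hzadm : Admissible (fun _ : ℝ => (0 : Euc n)) :=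
    ⟨measurable_const, Eventually.of_forall (by simp)⟩
  have e0 : traj x (fun _ : ℝ => (0 : Euc n)) 0 = x := traj_zero
  have hbq : Metric.infDist (traj x (fun _ : ℝ => (0:Euc n)) 0) M
      = dist (traj x (fun _ : ℝ => (0:Euc n)) 0) p := by rw [e0]; exact hpd
  have hbpos : 0 < dist (traj x (fun _ : ℝ => (0:Euc n)) 0) p := by
    rw [e0, ← hpd]; exact hdpos
  have hnot0 : ∀ s, 0 ≤ s → s ≤ (0:ℝ) → traj x (fun _ : ℝ => (0:Euc n)) s ∉ M := by
    intro s h1 h2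
    rw [show s = 0 from le_antisymm h2 h1, e0]
    exact hx
  have h := concat_hitTime hMcl hzadm le_rfl hpM hbq hbpos hnot0
  rw [e0] at h
  have hdp : 0 < dist x p := by rw [← hpd]; exact hdpos
  have hu : ‖(dist x p)⁻¹ • (p - x)‖ = 1 := by
    have hbn : ‖p - x‖ = dist x p := (dist_eq_norm' x p).symm
    rw [norm_smul, norm_inv, Real.norm_eq_abs, abs_of_pos hdp, hbn, inv_mul_cancel₀ hdp.ne']
  refine ⟨concat (fun _ : ℝ => (0:Euc n)) 0 ((dist x p)⁻¹ • (p - x)),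
    concat_admissible hzadm hu, ?_⟩
  rw [h, zero_add, ← hpd]

end Aux7


/-- under assumptions (F), (H) and (L) (near the target, `ℓ` is a positive
continuous function `γ̃` of the distance `d(x) = dist(x,M)`): (i) for `d(x) ≤ r`,
`v(x) = ∫₀^{d(x)} γ̃(s) ds` and every optimal control has hitting time exactly `d(x)`;
(ii) for every `x`, every optimal control has finite hitting time. -/
theorem stmt18 {n : ℕ} (M : Set (Euc n)) (l : Euc n → ℝ)
    (hMne : M.Nonempty) (hMcl : IsClosed M)
    (hlc : Continuous l) (hlbd : BddAbove (Set.range l))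
    (hlpos : ∀ z ∉ M, 0 < l z) (hlzero : ∀ z ∈ M, l z = 0)
    (γ : ℝ → ℝ)
    (hH : ∀ δ : ℝ, 0 < δ → 0 < γ δ ∧
      γ δ < sInf (l '' {y : Euc n | δ < Metric.infDist y M}))
    (γt : ℝ → ℝ) (r : ℝ) (hr : 0 < r)
    (hγtc : Continuous γt) (hγt0 : γt 0 = 0) (hγtpos : ∀ s : ℝ, 0 < s → 0 < γt s)
    (hL : ∀ x : Euc n, Metric.infDist x M ≤ r → l x = γt (Metric.infDist x M)) :
    (∀ x : Euc n, Metric.infDist x M ≤ r →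
      valE M l x = ENNReal.ofReal (∫ s in (0:ℝ)..(Metric.infDist x M), γt s) ∧
      ∀ α : ℝ → Euc n, IsOptimal M l x α →
        hitTime M x α = ENNReal.ofReal (Metric.infDist x M)) ∧
    (∀ x : Euc n, ∀ α : ℝ → Euc n, IsOptimal M l x α → hitTime M x α ≠ ⊤) := by
  have hzadm : Admissible (fun _ : ℝ => (0 : Euc n)) :=
    ⟨measurable_const, Eventually.of_forall (by simp)⟩
  constructor
  · -- part (i)
    intro x hxr
    have hd0 : 0 ≤ Metric.infDist x M := Metric.infDist_nonneg
    rcases hd0.lt_or_eq with hdpos | hdzero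
    · -- d > 0
      have hxnot : x ∉ M := by
        intro h
        rw [Metric.infDist_zero_of_mem h] at hdpos
        exact lt_irrefl _ hdpos
      -- dichotomy for any admissible control
      have hlow : ∀ β : ℝ → Euc n, Admissible β →
          (hitTime M x β = ENNReal.ofReal (Metric.infDist x M) →
            cost M l x β = ENNReal.ofReal (∫ s in (0:ℝ)..(Metric.infDist x M), γt s)) ∧
          (ENNReal.ofReal (Metric.infDist x M) < hitTime M x β →
            ENNReal.ofReal (∫ s in (0:ℝ)..(Metric.infDist x M), γt s) < cost M l x β) := by
        intro β hβ
        have e0 : traj x β 0 = x := traj_zero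
        constructor
        · intro hτeq
          have h := tail_cost_eq (t₀ := 0) hMcl hβ hγtc hγtpos hL le_rfl
            (by rw [e0]; exact hxr) (by rw [e0, zero_add]; exact hτeq)
          rw [e0] at h
          exact h
        · intro hτlt
          have h := tail_cost_lt (t₀ := 0) hMne hMcl hlc hlpos hlzero hH hr hγtc hγtpos hL
            hβ le_rfl (by rw [e0]; exact hxr) (by rw [e0, zero_add]; exact hτlt)
          rw [e0] at h
          exact h
      have hτge : ∀ β : ℝ → Euc n, Admissible β →
          ENNReal.ofReal (Metric.infDist x M) ≤ hitTime M x β := by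
        intro β hβ
        have hpos : ENNReal.ofReal 0 < hitTime M x β := by
          rw [ENNReal.ofReal_zero]
          exact hitTime_pos hMcl hβ hxnot
        have h := hitTime_ge hβ le_rfl hpos
        rwa [traj_zero, zero_add] at h
      obtain ⟨α₀, hadm₀, hτ₀⟩ := straight_exists hMcl hMne hxnot
      have hvalE : valE M l x = ENNReal.ofReal (∫ s in (0:ℝ)..(Metric.infDist x M), γt s) := by
        refine le_antisymm ?_ ?_
        · calc valE M l x ≤ cost M l x α₀ := iInf_le_of_le α₀ (iInf_le _ hadm₀)
            _ = _ := (hlow α₀ hadm₀).1 hτ₀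
        · refine le_iInf fun β => le_iInf fun hβ => ?_
          rcases (hτge β hβ).lt_or_eq with hlt | heq
          · exact ((hlow β hβ).2 hlt).le
          · exact ((hlow β hβ).1 heq.symm).ge
      refine ⟨hvalE, ?_⟩
      intro β hopt
      rcases (hτge β hopt.1).lt_or_eq with hlt | heq
      · exfalso
        have h := (hlow β hopt.1).2 hlt
        rw [hopt.2, hvalE] at h
        exact lt_irrefl _ h
      · exact heq.symm
    · -- d = 0
      have hxM : x ∈ M := (hMcl.mem_iff_infDist_zero hMne).2 hdzero.symm
      have hτany : ∀ β : ℝ → Euc n, hitTime M x β = 0 := by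
        intro β
        refine le_antisymm ?_ zero_le
        have h := hitTime_le (x := x) (α := β) le_rfl (by rw [traj_zero]; exact hxM)
        rwa [ENNReal.ofReal_zero] at h
      have hcost : ∀ β : ℝ → Euc n, cost M l x β = 0 := by
        intro β
        have hset : {s : ℝ | 0 < s ∧ ENNReal.ofReal s < hitTime M x β} = ∅ := by
          ext s
          simp [hτany β]
        unfold cost
        rw [hset, Measure.restrict_empty, lintegral_zero_measure]
      constructor
      · rw [← hdzero, intervalIntegral.integral_same, ENNReal.ofReal_zero]
        refine le_antisymm ?_ zero_le
        calc valE M l x ≤ cost M l x (fun _ => (0:Euc n)) :=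
              iInf_le_of_le _ (iInf_le _ hzadm)
          _ = 0 := hcost _
      · intro β _
        rw [← hdzero, ENNReal.ofReal_zero]
        exact hτany β
  · -- part (ii)
    intro x β hopt htop
    have hxnot : x ∉ M := by
      intro h
      have h1 := hitTime_le (x := x) (α := β) le_rfl (by rw [traj_zero]; exact h)
      rw [htop] at h1
      exact absurd h1 (by simp)
    have hintβ : Measurable fun t => ENNReal.ofReal (l (traj x β t)) :=
      ENNReal.measurable_ofReal.comp (hlc.comp (continuous_traj hopt.1)).measurable
    obtain ⟨α₀, hadm₀, hτ₀⟩ := straight_exists hMcl hMne hxnot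
    obtain ⟨C, hC⟩ := hlbd
    have hvfin : valE M l x ≠ ⊤ := by
      refine ne_top_of_le_ne_top ?_ (iInf_le_of_le α₀ (iInf_le _ hadm₀))
      have hsub : {s : ℝ | 0 < s ∧ ENNReal.ofReal s < hitTime M x α₀}
          ⊆ Set.Ioo 0 (Metric.infDist x M) := by
        rintro s ⟨h1, h2⟩
        rw [hτ₀] at h2
        exact ⟨h1, (ENNReal.ofReal_lt_ofReal_iff_of_nonneg h1.le).1 h2⟩
      have hbd : cost M l x α₀ ≤ ENNReal.ofReal C * volume (Set.Ioo 0 (Metric.infDist x M)) := by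
        calc cost M l x α₀
            ≤ ∫⁻ s in {s : ℝ | 0 < s ∧ ENNReal.ofReal s < hitTime M x α₀},
                ENNReal.ofReal C :=
              setLIntegral_mono measurable_const fun s _ =>
                ENNReal.ofReal_le_ofReal (hC (Set.mem_range_self _))
          _ ≤ ∫⁻ _ in Set.Ioo 0 (Metric.infDist x M), ENNReal.ofReal C :=
              lintegral_mono_set hsub
          _ = ENNReal.ofReal C * volume (Set.Ioo 0 (Metric.infDist x M)) :=
              setLIntegral_const _ _
      refine ne_top_of_le_ne_top ?_ hbd
      rw [Real.volume_Ioo]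
      exact (ENNReal.mul_lt_top ENNReal.ofReal_lt_top ENNReal.ofReal_lt_top).ne
    have hcostfin : cost M l x β ≠ ⊤ := by rw [hopt.2]; exact hvfin
    have hSeq : {s : ℝ | 0 < s ∧ ENNReal.ofReal s < hitTime M x β} = Set.Ioi 0 := by
      ext s
      simp [htop]
    have hcostform : cost M l x β
        = ∫⁻ s in Set.Ioi (0:ℝ), ENNReal.ofReal (l (traj x β s)) := by
      unfold cost
      rw [hSeq]
    -- find a time where the trajectory is close to M
    have hexists : ∃ t₀ : ℝ, 0 < t₀ ∧ Metric.infDist (traj x β t₀) M < r := by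
      by_contra hcon
      push_neg at hcon
      obtain ⟨c, hcpos, hcle⟩ :=
        l_lower_bound hr hlpos hlzero hH hγtc hγtpos hL hr le_rfl
      have hbig : ∫⁻ _ in Set.Ioi (0:ℝ), ENNReal.ofReal c
          ≤ ∫⁻ s in Set.Ioi (0:ℝ), ENNReal.ofReal (l (traj x β s)) :=
        setLIntegral_mono hintβ fun s hs =>
          ENNReal.ofReal_le_ofReal (hcle _ (hcon s hs))
      rw [setLIntegral_const, Real.volume_Ioi,
        ENNReal.mul_top (ENNReal.ofReal_pos.2 hcpos).ne'] at hbig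
      exact hcostfin (by rw [hcostform]; exact top_le_iff.1 hbig)
    obtain ⟨t₀, ht₀pos, ht₀r⟩ := hexists
    have hbpos2 : 0 < Metric.infDist (traj x β t₀) M := by
      refine (hMcl.notMem_iff_infDist_pos hMne).1 ?_
      exact not_mem_of_lt_hitTime ht₀pos.le (by rw [htop]; exact ENNReal.ofReal_lt_top)
    have htail := tail_cost_lt hMne hMcl hlc hlpos hlzero hH hr hγtc hγtpos hL
      hopt.1 ht₀pos.le ht₀r.le (by rw [htop]; exact ENNReal.ofReal_lt_top)
    -- competitor: go straight to the projection from time t₀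
    obtain ⟨q, hqM, hqd⟩ := hMcl.exists_infDist_eq_dist hMne (traj x β t₀)
    have hqpos : 0 < dist (traj x β t₀) q := hqd ▸ hbpos2
    have hnotβ : ∀ s, 0 ≤ s → s ≤ t₀ → traj x β s ∉ M := fun s h1 _ =>
      not_mem_of_lt_hitTime h1 (by rw [htop]; exact ENNReal.ofReal_lt_top)
    have hτc := concat_hitTime hMcl hopt.1 ht₀pos.le hqM hqd hqpos hnotβ
    have hcostc := concat_tail_cost hγtc hγtpos hL hopt.1 ht₀pos.le hqM hqd hqpos
      (hqd ▸ ht₀r.le)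
    have hdpq : 0 < dist (traj x β t₀) q := hqpos
    have huq : ‖(dist (traj x β t₀) q)⁻¹ • (q - traj x β t₀)‖ = 1 := by
      have hbn : ‖q - traj x β t₀‖ = dist (traj x β t₀) q := (dist_eq_norm' _ _).symm
      rw [norm_smul, norm_inv, Real.norm_eq_abs, abs_of_pos hdpq, hbn,
        inv_mul_cancel₀ hdpq.ne']
    have hadmc : Admissible (concat β t₀ ((dist (traj x β t₀) q)⁻¹ • (q - traj x β t₀))) :=
      concat_admissible hopt.1 huq
    have hsetc : {s : ℝ | 0 < s ∧ ENNReal.ofReal s <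
        hitTime M x (concat β t₀ ((dist (traj x β t₀) q)⁻¹ • (q - traj x β t₀)))}
        = Set.Ioo 0 (t₀ + dist (traj x β t₀) q) := by
      ext s
      simp only [Set.mem_setOf_eq, Set.mem_Ioo, hτc]
      constructor
      · rintro ⟨h1, h2⟩
        exact ⟨h1, (ENNReal.ofReal_lt_ofReal_iff_of_nonneg h1.le).1 h2⟩
      · rintro ⟨h1, h2⟩
        exact ⟨h1, (ENNReal.ofReal_lt_ofReal_iff_of_nonneg h1.le).2 h2⟩
    have hdisj : Disjoint (Set.Ioc (0:ℝ) t₀) (Set.Ioo t₀ (t₀ + dist (traj x β t₀) q)) := by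
      rw [Set.disjoint_left]
      rintro s ⟨_, h1⟩ ⟨h2, _⟩
      linarith
    have hIoosplit : Set.Ioo (0:ℝ) (t₀ + dist (traj x β t₀) q)
        = Set.Ioc 0 t₀ ∪ Set.Ioo t₀ (t₀ + dist (traj x β t₀) q) := by
      ext s
      simp only [Set.mem_Ioo, Set.mem_Ioc, Set.mem_union]
      constructor
      · rintro ⟨h1, h2⟩
        by_cases h : s ≤ t₀
        · exact Or.inl ⟨h1, h⟩
        · exact Or.inr ⟨lt_of_not_ge h, h2⟩
      · rintro (⟨h1, h2⟩ | ⟨h1, h2⟩)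
        · exact ⟨h1, by linarith⟩
        · exact ⟨by linarith, h2⟩
    have hcostβc : cost M l x (concat β t₀ ((dist (traj x β t₀) q)⁻¹ • (q - traj x β t₀)))
        = (∫⁻ s in Set.Ioc (0:ℝ) t₀, ENNReal.ofReal (l (traj x β s)))
          + ENNReal.ofReal (∫ s in (0:ℝ)..(dist (traj x β t₀) q), γt s) := by
      have hleft : (∫⁻ s in Set.Ioc (0:ℝ) t₀, ENNReal.ofReal
          (l (traj x (concat β t₀ ((dist (traj x β t₀) q)⁻¹ • (q - traj x β t₀))) s)))
          = ∫⁻ s in Set.Ioc (0:ℝ) t₀, ENNReal.ofReal (l (traj x β s)) :=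
        MeasureTheory.setLIntegral_congr_fun measurableSet_Ioc
          (fun s hs => by rw [concat_traj_left hs.2])
      unfold cost
      rw [hsetc, hIoosplit, lintegral_union measurableSet_Ioo hdisj, hcostc, hleft]
    have hStail : {t : ℝ | t₀ < t ∧ ENNReal.ofReal t < hitTime M x β} = Set.Ioi t₀ := by
      ext t
      simp [htop]
    have hsplitβ : cost M l x β
        = (∫⁻ s in Set.Ioc (0:ℝ) t₀, ENNReal.ofReal (l (traj x β s)))
          + ∫⁻ t in {t : ℝ | t₀ < t ∧ ENNReal.ofReal t < hitTime M x β},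
              ENNReal.ofReal (l (traj x β t)) := by
      rw [hcostform, hStail, ← lintegral_union measurableSet_Ioi
        (by rw [Set.disjoint_left]; rintro s ⟨_, h1⟩ h2; exact absurd h1 (not_le.2 h2)),
        Set.Ioc_union_Ioi_eq_Ioi ht₀pos.le]
    have hle1 : cost M l x β
        ≤ cost M l x (concat β t₀ ((dist (traj x β t₀) q)⁻¹ • (q - traj x β t₀))) := by
      rw [hopt.2]
      exact iInf_le_of_le _ (iInf_le _ hadmc)
    have hPfin : (∫⁻ s in Set.Ioc (0:ℝ) t₀, ENNReal.ofReal (l (traj x β s))) ≠ ⊤ := by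
      refine ne_top_of_le_ne_top hcostfin ?_
      rw [hsplitβ]
      exact le_self_add
    rw [hsplitβ, hcostβc] at hle1
    have h2 := (ENNReal.add_le_add_iff_left hPfin).1 hle1
    rw [← hqd] at h2
    exact lt_irrefl _ (lt_of_lt_of_le htail h2)
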